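/- Let d > 1 be an odd integer with 𝔻(d) ≠ 0. Let a_1, …, a_{(d−1)/2} be real numbers and set σ = ∑_{j=1}^{(d−1)/2} a_j S_{j/d}. If Σ_p(σ) = ∑_{i=1}^{p−1} σ(i/p) = 0 for every odd integer p > 1, then a_j = 0 for all j (hence σ = 0). -/

import Mathlib

/-- The characteristic-type function `χ_a`: value `1` on `[0,a)`, `1/2` at `a`, `0` after. -/
noncomputable def chiFn (a : ℝ) : ℝ → ℝ := fun x =>
  if x < a then 1 else if x = a then 1 / 2 else 0

/-- The symmetric jump function `S_a = χ_{1−a} − χ_a`. -/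
noncomputable def SFn (a : ℝ) : ℝ → ℝ := fun x => chiFn (1 - a) x - chiFn a x

/-- `Σ_p(f) = ∑_{i=1}^{p−1} f(i/p)`. -/
noncomputable def SigmaP (p : ℕ) (f : ℝ → ℝ) : ℝ :=
  ∑ i ∈ Finset.Ico 1 p, f ((i : ℝ) / (p : ℝ))

open Classical in
/-- `F_p(a) = 2⟨pa⟩ − 1` if `pa ∉ ℤ`, and `0` if `pa ∈ ℤ`. -/
noncomputable def Ffn (p : ℤ) (a : ℝ) : ℝ :=
  if ∃ k : ℤ, (p : ℝ) * a = (k : ℝ) then 0 else 2 * Int.fract ((p : ℝ) * a) - 1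

/-- The `((d−1)/2) × ((d−1)/2)` matrix with `(i,j)` entry `F_i(j/d)`, `1 ≤ i,j ≤ (d−1)/2`. -/
noncomputable def Dmat (d : ℕ) : Matrix (Fin ((d - 1) / 2)) (Fin ((d - 1) / 2)) ℝ :=
  fun i j => Ffn ((i : ℕ) + 1 : ℤ) (((j : ℕ) + 1 : ℝ) / (d : ℝ))

/-- `𝔻(d)`, the determinant of `Dmat d`. -/
noncomputable def Ddet (d : ℕ) : ℝ := (Dmat d).det

lemma chi_reflect (a x : ℝ) : chiFn (1 - a) (1 - x) = 1 - chiFn a x := by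
  unfold chiFn
  rcases lt_trichotomy x a with h | h | h
  · rw [if_neg (by linarith), if_neg (by intro hh; nlinarith), if_pos h]
    norm_num
  · subst h
    rw [if_neg (lt_irrefl _), if_pos rfl, if_neg (lt_irrefl _), if_pos rfl]
    norm_num
  · rw [if_pos (by linarith), if_neg (by linarith), if_neg (by intro hh; nlinarith)]
    norm_num

lemma sigma_S_reflect (p : ℕ) (hp : 1 ≤ p) (a : ℝ) :
    SigmaP p (SFn a) = (p - 1) - 2 * SigmaP p (chiFn a) := by
  unfold SigmaP SFn
  rw [Finset.sum_sub_distrib]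
  have key : ∑ i ∈ Finset.Ico 1 p, chiFn (1 - a) ((i : ℝ) / p)
      = ∑ i ∈ Finset.Ico 1 p, (1 - chiFn a ((i : ℝ) / p)) := by
    apply Finset.sum_nbij' (fun i => p - i) (fun i => p - i)
    · intro i hi; simp only [Finset.mem_Ico] at *; omega
    · intro i hi; simp only [Finset.mem_Ico] at *; omega
    · intro i hi; simp only [Finset.mem_Ico] at hi; omega
    · intro i hi; simp only [Finset.mem_Ico] at hi; omega
    · intro i hi
      simp only [Finset.mem_Ico] at hi
      have hp0 : (p : ℝ) ≠ 0 := by positivity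
      have hcast : ((p - i : ℕ) : ℝ) = (p : ℝ) - i := by
        have : i ≤ p := by omega
        push_cast [this]; ring
      have h2 : ((p - i : ℕ) : ℝ) / p = 1 - (i : ℝ) / p := by
        rw [hcast]; field_simp
      rw [h2]
      have := chi_reflect a (1 - (i : ℝ) / p)
      simpa using this
  rw [key, Finset.sum_sub_distrib, Finset.sum_const, Nat.card_Ico, nsmul_eq_mul,
    Nat.cast_sub hp, Nat.cast_one, mul_one]
  ring

lemma sigma_chi (p j d : ℕ) (hp : 1 ≤ p) (hj : 0 < j) (hjd : j < d) :
    SigmaP p (chiFn ((j : ℝ) / d)) =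
      (((p * j - 1) / d : ℕ) : ℝ) + (if d ∣ p * j then (1 : ℝ) / 2 else 0) := by
  classical
  have hd : 0 < d := by omega
  have hdR : (0 : ℝ) < d := by exact_mod_cast hd
  have hpR : (0 : ℝ) < p := by exact_mod_cast hp
  have hpj : 1 ≤ p * j := Nat.mul_pos hp hj
  have hterm : ∀ i ∈ Finset.Ico 1 p, chiFn ((j : ℝ) / d) ((i : ℝ) / p)
      = (if d * i < p * j then (1 : ℝ) else 0) + (if d * i = p * j then (1 : ℝ) / 2 else 0) := by
    intro i hi
    have e1 : i * d = d * i := Nat.mul_comm i d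
    have e2 : j * p = p * j := Nat.mul_comm j p
    have h1 : (i : ℝ) / p < (j : ℝ) / d ↔ d * i < p * j := by
      rw [div_lt_div_iff₀ hpR hdR]
      constructor
      · intro hh
        have h3 : i * d < j * p := by exact_mod_cast hh
        omega
      · intro hh
        have h3 : i * d < j * p := by omega
        exact_mod_cast h3
    have h2 : (i : ℝ) / p = (j : ℝ) / d ↔ d * i = p * j := by
      rw [div_eq_div_iff hpR.ne' hdR.ne']
      constructor
      · intro hh
        have h3 : i * d = j * p := by exact_mod_cast hh
        omega
      · intro hh
        have h3 : i * d = j * p := by omega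
        exact_mod_cast h3
    unfold chiFn
    by_cases hlt : d * i < p * j
    · rw [if_pos (h1.mpr hlt), if_pos hlt, if_neg (by omega)]
      norm_num
    · by_cases heq : d * i = p * j
      · rw [if_neg (fun hh => hlt (h1.mp hh)), if_pos (h2.mpr heq), if_neg hlt, if_pos heq]
        norm_num
      · rw [if_neg (fun hh => hlt (h1.mp hh)), if_neg (fun hh => heq (h2.mp hh)),
          if_neg hlt, if_neg heq]
        norm_num
  unfold SigmaP
  rw [Finset.sum_congr rfl hterm, Finset.sum_add_distrib]
  have hP : Finset.filter (fun i => d * i < p * j) (Finset.Ico 1 p)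
      = Finset.Ico 1 ((p * j - 1) / d + 1) := by
    ext i
    simp only [Finset.mem_filter, Finset.mem_Ico]
    have e1 : i * d = d * i := Nat.mul_comm i d
    constructor
    · rintro ⟨⟨h1, _⟩, h3⟩
      refine ⟨h1, ?_⟩
      have : i ≤ (p * j - 1) / d := by
        rw [Nat.le_div_iff_mul_le hd]
        omega
      omega
    · rintro ⟨h1, h2⟩
      have h3 : i ≤ (p * j - 1) / d := by omega
      rw [Nat.le_div_iff_mul_le hd] at h3
      have hij : d * i < p * j := by omega
      refine ⟨⟨h1, ?_⟩, hij⟩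
      have h4 : d * i < d * p := by
        calc d * i < p * j := hij
        _ ≤ p * d := Nat.mul_le_mul_left p (by omega)
        _ = d * p := Nat.mul_comm p d
      exact Nat.lt_of_mul_lt_mul_left h4
  have hsum1 : ∑ i ∈ Finset.Ico 1 p, (if d * i < p * j then (1 : ℝ) else 0)
      = (((p * j - 1) / d : ℕ) : ℝ) := by
    rw [Finset.sum_boole, hP, Nat.card_Ico]
    simp
  have hsum2 : ∑ i ∈ Finset.Ico 1 p, (if d * i = p * j then (1 : ℝ) / 2 else 0)
      = (if d ∣ p * j then (1 : ℝ) / 2 else 0) := by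
    by_cases hdvd : d ∣ p * j
    · obtain ⟨q, hq⟩ := hdvd
      have hq1 : 1 ≤ q := by
        rcases Nat.eq_zero_or_pos q with rfl | h
        · simp at hq; omega
        · exact h
      have hqp : q < p := by
        have h5 : p * j < p * d := Nat.mul_lt_mul_of_pos_left hjd hp
        have h4 : d * q < d * p := by
          rw [← hq]
          calc p * j < p * d := h5
          _ = d * p := Nat.mul_comm p d
        exact Nat.lt_of_mul_lt_mul_left h4
      have hfil : Finset.filter (fun i => d * i = p * j) (Finset.Ico 1 p) = {q} := by
        ext i
        simp only [Finset.mem_filter, Finset.mem_Ico, Finset.mem_singleton]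
        constructor
        · rintro ⟨_, h2⟩
          have : d * i = d * q := by omega
          exact Nat.eq_of_mul_eq_mul_left hd this
        · rintro rfl
          exact ⟨⟨hq1, hqp⟩, hq.symm⟩
      rw [← Finset.sum_filter, hfil, if_pos ⟨q, hq⟩, Finset.sum_singleton]
    · rw [if_neg hdvd]
      apply Finset.sum_eq_zero
      intro i hi
      rw [if_neg]
      intro hh
      exact hdvd ⟨i, hh.symm⟩
  rw [hsum1, hsum2]

lemma Ffn_cond_iff (p j d : ℕ) (hd : 0 < d) :
    (∃ k : ℤ, (((p : ℕ) : ℤ) : ℝ) * ((j : ℝ) / d) = (k : ℝ)) ↔ d ∣ p * j := by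
  have hdR : (d : ℝ) ≠ 0 := by positivity
  constructor
  · rintro ⟨k, hk⟩
    have hk' : ((p * j : ℕ) : ℝ) = (k : ℝ) * d := by push_cast; field_simp at hk; push_cast at hk; linarith
    have hk2 : ((p * j : ℕ) : ℤ) = k * d := by exact_mod_cast hk'
    have : (d : ℤ) ∣ ((p * j : ℕ) : ℤ) := ⟨k, by linarith [hk2]⟩
    exact_mod_cast this
  · rintro ⟨q, hq⟩
    refine ⟨(q : ℤ), ?_⟩
    have : ((p * j : ℕ) : ℝ) = (q : ℝ) * d := by rw [hq]; push_cast; ring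
    push_cast at this ⊢
    field_simp
    linarith

lemma sigma_S (p j d : ℕ) (hp : 1 ≤ p) (hj : 0 < j) (hjd : 2 * j < d) :
    SigmaP p (SFn ((j : ℝ) / d)) = (p : ℝ) * (1 - 2 * (j : ℝ) / d) + Ffn (p : ℤ) ((j : ℝ) / d) := by
  classical
  have hd : 0 < d := by omega
  have hdR : (0 : ℝ) < d := by exact_mod_cast hd
  have hpj : 1 ≤ p * j := Nat.mul_pos hp hj
  rw [sigma_S_reflect p hp, sigma_chi p j d hp hj (by omega)]
  have hsucc : p * j / d = (p * j - 1) / d + (if d ∣ p * j then 1 else 0) := by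
    have h1 := Nat.succ_div (a := p * j - 1) (b := d)
    rwa [Nat.sub_add_cancel hpj] at h1
  have hx : (((p : ℕ) : ℤ) : ℝ) * ((j : ℝ) / d) = ((p * j : ℕ) : ℝ) / d := by
    push_cast; ring
  unfold Ffn
  by_cases hdvd : d ∣ p * j
  · rw [if_pos ((Ffn_cond_iff p j d hd).mpr hdvd), if_pos hdvd]
    rw [if_pos hdvd] at hsucc
    set K := (p * j - 1) / d with hK
    have hKd : (K + 1) * d = p * j := by
      rw [← hsucc]; exact Nat.div_mul_cancel hdvd
    have hKdR : ((K : ℝ) + 1) * d = (p : ℝ) * j := by exact_mod_cast hKd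
    field_simp
    nlinarith [hKdR]
  · rw [if_neg (fun hh => hdvd ((Ffn_cond_iff p j d hd).mp hh)), if_neg hdvd]
    rw [if_neg hdvd, add_zero] at hsucc
    set K := (p * j - 1) / d with hK
    have h1 : d * (p * j / d) ≤ p * j := Nat.mul_div_le _ _
    have h2 : p * j < d * (p * j / d) + d := by
      have := Nat.div_add_mod (p * j) d
      have := Nat.mod_lt (p * j) hd
      omega
    rw [hsucc] at h1 h2
    have hfloor : ⌊(((p : ℕ) : ℤ) : ℝ) * ((j : ℝ) / d)⌋ = (K : ℤ) := by
      rw [hx, Int.floor_eq_iff]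
      constructor
      · rw [le_div_iff₀ hdR]
        have : (d : ℝ) * K ≤ ((p * j : ℕ) : ℝ) := by exact_mod_cast h1
        push_cast at this ⊢
        linarith
      · rw [div_lt_iff₀ hdR]
        have : ((p * j : ℕ) : ℝ) < (d : ℝ) * K + d := by exact_mod_cast h2
        push_cast at this ⊢
        linarith
    rw [Int.fract, hfloor, hx]
    push_cast
    field_simp
    ring

lemma Ffn_shift (q t j d : ℕ) (hd : 0 < d) :
    Ffn ((q + t * d : ℕ) : ℤ) ((j : ℝ) / d) = Ffn (q : ℤ) ((j : ℝ) / d) := by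
  classical
  have hdR : (d : ℝ) ≠ 0 := by positivity
  have hx : (((q + t * d : ℕ) : ℤ) : ℝ) * ((j : ℝ) / d)
      = (((q : ℕ) : ℤ) : ℝ) * ((j : ℝ) / d) + (((t * j : ℕ) : ℤ) : ℝ) := by
    push_cast
    field_simp
  have hiff : (∃ k : ℤ, (((q : ℕ) : ℤ) : ℝ) * ((j : ℝ) / d) + (((t * j : ℕ) : ℤ) : ℝ) = (k : ℝ))
      ↔ ∃ k : ℤ, (((q : ℕ) : ℤ) : ℝ) * ((j : ℝ) / d) = (k : ℝ) := by
    constructor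
    · rintro ⟨k, hk⟩
      exact ⟨k - (t * j : ℕ), by push_cast at hk ⊢; linarith⟩
    · rintro ⟨k, hk⟩
      exact ⟨k + (t * j : ℕ), by push_cast at hk ⊢; linarith⟩
  unfold Ffn
  rw [hx, Int.fract_add_intCast, if_congr hiff rfl rfl]

/-- if `d > 1` is odd with `𝔻(d) ≠ 0` and `σ = ∑_j a_j S_{j/d}` satisfies
`Σ_p(σ) = 0` for every odd `p > 1`, then all `a_j = 0`. -/
theorem stmt_5 (d : ℕ) (hd : 1 < d) (hodd : Odd d) (hD : Ddet d ≠ 0)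
    (a : Fin ((d - 1) / 2) → ℝ)
    (h : ∀ p : ℕ, 1 < p → Odd p →
      SigmaP p (fun x => ∑ j, a j * SFn (((j : ℕ) + 1 : ℝ) / (d : ℝ)) x) = 0) :
    ∀ j, a j = 0 := by
  classical
  obtain ⟨m, hm⟩ := hodd
  have hd3 : 3 ≤ d := by omega
  have hd0 : 0 < d := by omega
  have hdR : (0 : ℝ) < d := by exact_mod_cast hd0
  have hjb : ∀ j : Fin ((d - 1) / 2), 2 * ((j : ℕ) + 1) < d := by
    intro j
    have := j.2
    omega
  set C : ℝ := ∑ j : Fin ((d - 1) / 2), a j * (1 - 2 * ((j : ℕ) + 1 : ℝ) / d) with hC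
  have hE : ∀ p : ℕ, 1 < p → Odd p →
      (p : ℝ) * C + ∑ j : Fin ((d - 1) / 2), a j * Ffn (p : ℤ) (((j : ℕ) + 1 : ℝ) / d) = 0 := by
    intro p hp1 hpodd
    have h0 := h p hp1 hpodd
    have hswap : SigmaP p (fun x => ∑ j, a j * SFn (((j : ℕ) + 1 : ℝ) / d) x)
        = ∑ j : Fin ((d - 1) / 2), a j * SigmaP p (SFn (((j : ℕ) + 1 : ℝ) / d)) := by
      unfold SigmaP
      rw [Finset.sum_comm]
      exact Finset.sum_congr rfl fun j _ => (Finset.mul_sum _ _ _).symm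
    rw [hswap] at h0
    have hval : ∀ j : Fin ((d - 1) / 2), SigmaP p (SFn (((j : ℕ) + 1 : ℝ) / d))
        = (p : ℝ) * (1 - 2 * ((j : ℕ) + 1 : ℝ) / d) + Ffn (p : ℤ) (((j : ℕ) + 1 : ℝ) / d) := by
      intro j
      have hs := sigma_S p ((j : ℕ) + 1) d (by omega) (by omega) (hjb j)
      push_cast at hs ⊢
      convert hs using 3
    rw [Finset.sum_congr rfl fun j _ => by rw [hval j]] at h0
    rw [← h0, hC, Finset.mul_sum, ← Finset.sum_add_distrib]
    exact Finset.sum_congr rfl fun j _ => by ring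
  have hCzero : C = 0 := by
    have h3 := hE 3 (by omega) ⟨1, by ring⟩
    have h3' := hE (3 + 2 * d) (by omega) ⟨d + 1, by ring⟩
    have hsh : ∀ j : Fin ((d - 1) / 2),
        Ffn ((3 + 2 * d : ℕ) : ℤ) (((j : ℕ) + 1 : ℝ) / d)
          = Ffn ((3 : ℕ) : ℤ) (((j : ℕ) + 1 : ℝ) / d) := by
      intro j
      have := Ffn_shift 3 2 ((j : ℕ) + 1) d hd0
      push_cast at this ⊢
      convert this using 3
    rw [Finset.sum_congr rfl fun j _ => by rw [hsh j]] at h3'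
    have hcast : ((3 + 2 * d : ℕ) : ℝ) = 3 + 2 * (d : ℝ) := by push_cast; ring
    rw [hcast] at h3'
    have h33 : ((3 : ℕ) : ℝ) = (3 : ℝ) := by norm_num
    rw [h33] at h3
    have : 2 * (d : ℝ) * C = 0 := by
      have hnc : ((3 : ℕ) : ℤ) = (3 : ℤ) := by norm_num
      rw [hnc] at h3
      linarith
    have h2d : (2 : ℝ) * d ≠ 0 := by positivity
    exact (mul_eq_zero.mp this).resolve_left h2d
  have hrow : ∀ i : Fin ((d - 1) / 2), ∑ j, Dmat d i j * a j = 0 := by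
    intro i
    set q : ℕ := (i : ℕ) + 1 with hq
    set p : ℕ := if q % 2 = 0 then q + 1 * d else q + 2 * d with hp
    have hp1 : 1 < p := by rw [hp]; split_ifs <;> omega
    have hpodd : Odd p := by
      rw [Nat.odd_iff]
      rw [hp]; split_ifs with hpar <;> omega
    have hEp := hE p hp1 hpodd
    rw [hCzero, mul_zero, zero_add] at hEp
    have hFeq : ∀ j : Fin ((d - 1) / 2),
        Ffn (p : ℤ) (((j : ℕ) + 1 : ℝ) / d) = Dmat d i j := by
      intro j
      have hD1 := Ffn_shift q 1 ((j : ℕ) + 1) d hd0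
      have hD2 := Ffn_shift q 2 ((j : ℕ) + 1) d hd0
      have hqz : ((q : ℕ) : ℤ) = ((i : ℕ) : ℤ) + 1 := by rw [hq]; push_cast; ring
      have hDm : Dmat d i j = Ffn (((i : ℕ) : ℤ) + 1) (((j : ℕ) + 1 : ℝ) / d) := by
        unfold Dmat
        norm_num
      rw [hDm, ← hqz]
      have hcst : (((j : ℕ) + 1 : ℕ) : ℝ) = ((j : ℕ) + 1 : ℝ) := by push_cast; ring
      rw [hp]
      split_ifs with hpar
      · rw [← hcst]; exact hD1
      · rw [← hcst]; exact hD2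
    rw [Finset.sum_congr rfl fun j _ => by rw [hFeq j]] at hEp
    rw [← hEp]
    exact Finset.sum_congr rfl fun j _ => by ring
  have hmul0 : (Dmat d).mulVec a = 0 := by
    funext i
    simpa [Matrix.mulVec, dotProduct] using hrow i
  have hunit : IsUnit (Dmat d) := (Matrix.isUnit_iff_isUnit_det _).mpr (isUnit_iff_ne_zero.mpr hD)
  have hinj := Matrix.mulVec_injective_iff_isUnit.mpr hunit
  have ha : a = 0 := by
    apply hinj
    rw [hmul0, Matrix.mulVec_zero]
  intro j
  rw [ha]
  rfl
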